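/- Let N ≥ 1, let w₁,…,w_N be positive integers, and let ℂˣ act on ℂ^N by z • x = (z^{w₁}x₁, …, z^{w_N}x_N). If C ⊆ ℂ^N is Zariski closed and 0 ∉ C, then for every w₀ ∈ ℂ^N the set {z ∈ ℂˣ : z • w₀ ∈ C} is finite. -/
import Mathlib


/-- A subset of `ℂ^N` is Zariski closed if it is the common zero set of a family of
polynomials. -/
def IsZariskiClosed {N : ℕ} (C : Set (Fin N → ℂ)) : Prop :=
  ∃ S : Set (MvPolynomial (Fin N) ℂ),
    C = {x | ∀ p ∈ S, MvPolynomial.eval x p = 0}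

/-- let `ℂˣ` act on `ℂ^N` with positive weights `w₁,…,w_N`, i.e.
`z • x = (z^{w₁}x₁,…,z^{w_N}x_N)`. If `C ⊆ ℂ^N` is Zariski closed and `0 ∉ C`, then
for every `w₀` the set `{z ∈ ℂˣ : z • w₀ ∈ C}` is finite. -/
theorem stmt_5 {N : ℕ} (hN : 1 ≤ N) (w : Fin N → ℕ) (hw : ∀ i, 0 < w i)
    (C : Set (Fin N → ℂ)) (hC : IsZariskiClosed C) (h0 : (0 : Fin N → ℂ) ∉ C)
    (w₀ : Fin N → ℂ) :
    {z : ℂˣ | (fun i => (z : ℂ) ^ w i * w₀ i) ∈ C}.Finite := by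
  obtain ⟨S, rfl⟩ := hC
  simp only [Set.mem_setOf_eq, not_forall] at h0
  obtain ⟨p, hpS, hp0⟩ := h0
  -- one-variable polynomial q(z) = p(z^{w i} * w₀ i)
  set q : Polynomial ℂ :=
    MvPolynomial.eval₂ Polynomial.C (fun i => Polynomial.X ^ w i * Polynomial.C (w₀ i)) p
    with hq
  have hqeval : ∀ z : ℂ, q.eval z = MvPolynomial.eval (fun i => z ^ w i * w₀ i) p := by
    intro z
    rw [hq]
    rw [show (Polynomial.eval z q = (Polynomial.evalRingHom z) q) from rfl]
    rw [hq, MvPolynomial.eval₂_comp_left (Polynomial.evalRingHom z)]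
    have h1 : (Polynomial.evalRingHom z).comp Polynomial.C = RingHom.id ℂ := by
      ext x; simp
    have h2 : ((Polynomial.evalRingHom z : Polynomial ℂ → ℂ) ∘
        fun i => Polynomial.X ^ w i * Polynomial.C (w₀ i)) =
        fun i => z ^ w i * w₀ i := by
      funext i; simp only [Function.comp_apply, Polynomial.coe_evalRingHom, Polynomial.eval_mul, Polynomial.eval_pow, Polynomial.eval_X, Polynomial.eval_C]
    rw [h1, h2]
    rfl
  have hq0 : q.eval 0 ≠ 0 := by
    have : (fun i => (0:ℂ) ^ w i * w₀ i) = (0 : Fin N → ℂ) := by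
      funext i
      simp [zero_pow (hw i).ne']
    rw [hqeval 0, this]
    exact hp0
  have hqne : q ≠ 0 := fun h => hq0 (by simp [h])
  have hfin : {z : ℂ | q.IsRoot z}.Finite := Polynomial.finite_setOf_isRoot hqne
  have hsub : {z : ℂˣ | (fun i => (z : ℂ) ^ w i * w₀ i) ∈
      {x | ∀ p ∈ S, MvPolynomial.eval x p = 0}} ⊆
      (fun z : ℂˣ => (z : ℂ)) ⁻¹' {z : ℂ | q.IsRoot z} := by
    intro z hz
    simp only [Set.mem_preimage, Set.mem_setOf_eq, Polynomial.IsRoot, hqeval]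
    exact hz p hpS
  exact Set.Finite.subset (hfin.preimage (fun a _ b _ h => Units.ext h)) hsub
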